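/- Let A be a locally C*-algebra and E a Hilbert A-module. Then the locally C*-algebra L_A(E) of adjointable operators on E, with the topology determined by the seminorms p̃(T) = sup{‖Tξ‖_p : ‖ξ‖_p ≤ 1} for p ∈ S(A), is isomorphic as a topological *-algebra to the inverse limit lim← L_{A_p}(E_p), where the canonical maps (π_p)_* : L_A(E) → L_{A_p}(E_p) satisfy (π_p)_*(T)(σ_p(ξ)) = σ_p(Tξ). -/

import Mathlib

noncomputable section

open Filter Topology Set
open scoped InnerProductSpace

universe u v w

/-- A continuous C*-seminorm on a topological `*`-algebra over `ℂ`. -/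
structure CStarSeminorm (A : Type*) [Ring A] [StarRing A] [Algebra ℂ A]
    [TopologicalSpace A] where
  toFun : A → ℝ
  nonneg' : ∀ a, 0 ≤ toFun a
  add_le' : ∀ a b, toFun (a + b) ≤ toFun a + toFun b
  smul' : ∀ (c : ℂ) (a : A), toFun (c • a) = ‖c‖ * toFun a
  mul_le' : ∀ a b, toFun (a * b) ≤ toFun a * toFun b
  star_mul_self' : ∀ a, toFun (star a * a) = toFun a ^ 2
  continuous' : Continuous toFun

instance {A : Type*} [Ring A] [StarRing A] [Algebra ℂ A] [TopologicalSpace A] :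
    FunLike (CStarSeminorm A) A ℝ where
  coe := CStarSeminorm.toFun
  coe_injective := by rintro ⟨⟩ ⟨⟩ h; congr

/-- `A` is a locally C*-algebra: it is a (complete, Hausdorff, topological) `*`-algebra
whose topology is determined by its continuous C*-seminorms: a filter tends to `0`
iff its image under every continuous C*-seminorm tends to `0`. -/
def IsLocallyCStarAlgebra (A : Type*) [Ring A] [StarRing A] [Algebra ℂ A]
    [TopologicalSpace A] : Prop :=
  ∀ l : Filter A, Tendsto id l (nhds 0) ↔
    ∀ p : CStarSeminorm A, Tendsto (fun a => p a) l (nhds (0 : ℝ))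

/-- A Hilbert module over a locally C*-algebra `A`: a right `A`-module with an
`A`-valued inner product, complete for the topology determined by the seminorms
`ξ ↦ √(p ⟨ξ,ξ⟩)`, `p` a continuous C*-seminorm on `A`. -/
structure HilbertModule (A : Type u) [Ring A] [StarRing A] [Algebra ℂ A] [UniformSpace A]
    (E : Type v) [AddCommGroup E] [Module ℂ E] [UniformSpace E] where
  smul : E → A → E
  smul_add : ∀ ξ a b, smul ξ (a + b) = smul ξ a + smul ξ b
  add_smul : ∀ ξ η a, smul (ξ + η) a = smul ξ a + smul η a
  smul_smul : ∀ ξ a b, smul (smul ξ a) b = smul ξ (a * b)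
  smul_commC : ∀ (c : ℂ) ξ a, smul (c • ξ) a = c • smul ξ a
  smul_algebra : ∀ (c : ℂ) ξ a, smul ξ (c • a) = c • smul ξ a
  inner : E → E → A
  inner_add_right : ∀ ξ η ζ, inner ξ (η + ζ) = inner ξ η + inner ξ ζ
  inner_smulC : ∀ (c : ℂ) ξ η, inner ξ (c • η) = c • inner ξ η
  inner_smul_right : ∀ ξ η a, inner ξ (smul η a) = inner ξ η * a
  star_inner : ∀ ξ η, star (inner ξ η) = inner η ξ
  inner_self_pos : ∀ ξ, ∃ a, inner ξ ξ = star a * a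
  inner_self_eq_zero : ∀ ξ, inner ξ ξ = 0 → ξ = 0
  topology_eq : ∀ l : Filter E, Tendsto id l (nhds 0) ↔
      ∀ p : CStarSeminorm A, Tendsto (fun ξ => Real.sqrt (p (inner ξ ξ))) l (nhds (0 : ℝ))
  complete : CompleteSpace E

/-- A Hilbert C*-module over a C*-algebra `B` (normed version). -/
structure HilbertCStarModule (B : Type u) [NormedRing B] [StarRing B] [CStarRing B]
    [NormedAlgebra ℂ B] [StarModule ℂ B] [CompleteSpace B]
    (E : Type v) [NormedAddCommGroup E] [NormedSpace ℂ E] where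
  smul : E → B → E
  smul_add : ∀ ξ a b, smul ξ (a + b) = smul ξ a + smul ξ b
  add_smul : ∀ ξ η a, smul (ξ + η) a = smul ξ a + smul η a
  smul_smul : ∀ ξ a b, smul (smul ξ a) b = smul ξ (a * b)
  smul_commC : ∀ (c : ℂ) ξ a, smul (c • ξ) a = c • smul ξ a
  smul_algebra : ∀ (c : ℂ) ξ a, smul ξ (c • a) = c • smul ξ a
  inner : E → E → B
  inner_add_right : ∀ ξ η ζ, inner ξ (η + ζ) = inner ξ η + inner ξ ζ
  inner_smulC : ∀ (c : ℂ) ξ η, inner ξ (c • η) = c • inner ξ η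
  inner_smul_right : ∀ ξ η a, inner ξ (smul η a) = inner ξ η * a
  star_inner : ∀ ξ η, star (inner ξ η) = inner η ξ
  inner_self_pos : ∀ ξ, ∃ a, inner ξ ξ = star a * a
  inner_self_eq_zero : ∀ ξ, inner ξ ξ = 0 → ξ = 0
  norm_eq : ∀ ξ, ‖ξ‖ = Real.sqrt ‖inner ξ ξ‖
  complete : CompleteSpace E

/-- A representation of a topological `*`-algebra `A` on a Hilbert space `H`:
a continuous `*`-homomorphism into the bounded operators. -/
structure RepOn (A : Type u) [Ring A] [StarRing A] [Algebra ℂ A] [TopologicalSpace A]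
    (H : Type v) [NormedAddCommGroup H] [InnerProductSpace ℂ H] [CompleteSpace H] where
  toFun : A → H →L[ℂ] H
  map_add : ∀ a b, toFun (a + b) = toFun a + toFun b
  map_mul : ∀ a b, toFun (a * b) = (toFun a).comp (toFun b)
  map_smulC : ∀ (c : ℂ) a, toFun (c • a) = c • toFun a
  map_star : ∀ a, toFun (star a) = ContinuousLinearMap.adjoint (toFun a)
  continuous : Continuous toFun

/-- A representation is non-degenerate if `φ(A)H` spans a dense subspace. -/
def RepOn.Nondegenerate {A : Type u} [Ring A] [StarRing A] [Algebra ℂ A] [TopologicalSpace A]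
    {H : Type v} [NormedAddCommGroup H] [InnerProductSpace ℂ H] [CompleteSpace H]
    (φ : RepOn A H) : Prop :=
  Dense (↑(Submodule.span ℂ {h : H | ∃ a x, h = φ.toFun a x}) : Set H)

/-- Unitary equivalence of two representations. -/
def UnitarilyEquiv {A : Type u} [Ring A] [StarRing A] [Algebra ℂ A] [TopologicalSpace A]
    {H₁ : Type v} [NormedAddCommGroup H₁] [InnerProductSpace ℂ H₁] [CompleteSpace H₁]
    {H₂ : Type w} [NormedAddCommGroup H₂] [InnerProductSpace ℂ H₂] [CompleteSpace H₂]
    (φ₁ : RepOn A H₁) (φ₂ : RepOn A H₂) : Prop :=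
  ∃ U : H₁ ≃ₗᵢ[ℂ] H₂, ∀ a h, U (φ₁.toFun a h) = φ₂.toFun a (U h)

/-- The data of the induced Hilbert space `E ⊗_φ H`: a Hilbert space `K` together with
a map `ι : E × H → K` whose image spans a dense subspace and such that
`⟪ι ξ h₁, ι η h₂⟫ = ⟪h₁, φ(⟨ξ,η⟩) h₂⟫`. -/
structure InducedSpace {B : Type u} {E : Type v}
    {H : Type w} [NormedAddCommGroup H] [InnerProductSpace ℂ H] [CompleteSpace H]
    (innerE : E → E → B) (φ : B → H →L[ℂ] H)
    (K : Type*) [NormedAddCommGroup K] [InnerProductSpace ℂ K] [CompleteSpace K] where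
  ι : E → H → K
  inner_eq : ∀ ξ η h₁ h₂, ⟪ι ξ h₁, ι η h₂⟫_ℂ = ⟪h₁, φ (innerE ξ η) h₂⟫_ℂ
  dense : Dense (↑(Submodule.span ℂ {k : K | ∃ ξ h, k = ι ξ h}) : Set K)

/-- `S` is the adjoint of `T` relative to the `B`-valued inner product `innerE`. -/
def Adjointable {B : Type u} {E : Type v} (innerE : E → E → B) (T S : E → E) : Prop :=
  ∀ ξ η, innerE (T ξ) η = innerE ξ (S η)

/-- `p̃(T) ≤ C` for the operator seminorm `p̃` associated to a C*-seminorm `p`. -/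
def OpSeminormLE {A : Type u} {E : Type v} (innerE : E → E → A) (p : A → ℝ)
    (T : E → E) (C : ℝ) : Prop :=
  ∀ ξ, p (innerE (T ξ) (T ξ)) ≤ C ^ 2 * p (innerE ξ ξ)

/-- A non-degenerate continuous action of a locally C*-algebra `A` on a Hilbert
module `E` over a locally C*-algebra `B`, i.e. a non-degenerate continuous
`*`-morphism `A → L_B(E)`. -/
structure ModuleAction (A : Type u) [Ring A] [StarRing A] [Algebra ℂ A] [UniformSpace A]
    {B : Type v} [Ring B] [StarRing B] [Algebra ℂ B] [UniformSpace B]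
    {E : Type w} [AddCommGroup E] [Module ℂ E] [UniformSpace E]
    (M : HilbertModule B E) where
  Φ : A → E → E
  map_add : ∀ a b ξ, Φ (a + b) ξ = Φ a ξ + Φ b ξ
  map_addE : ∀ a ξ η, Φ a (ξ + η) = Φ a ξ + Φ a η
  map_mul : ∀ a b ξ, Φ (a * b) ξ = Φ a (Φ b ξ)
  map_smulC : ∀ (c : ℂ) a ξ, Φ (c • a) ξ = c • Φ a ξ
  map_smulE : ∀ (c : ℂ) a ξ, Φ a (c • ξ) = c • Φ a ξ
  map_smulB : ∀ a ξ b, Φ a (M.smul ξ b) = M.smul (Φ a ξ) b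
  adjoint : ∀ a, Adjointable M.inner (Φ a) (Φ (star a))
  continuous : ∀ q : CStarSeminorm B, ∃ p : CStarSeminorm A,
      ∀ a, OpSeminormLE M.inner (fun x => q x) (Φ a) (p a)
  nondeg : Dense (↑(Submodule.span ℂ {ξ : E | ∃ a η, ξ = Φ a η}) : Set E)

/-- `ψ` is the representation induced (via the induced space data `ind`) from the
action `Φ` of `A` on the module. -/
def IsInducedRep {A : Type u} [Ring A] [StarRing A] [Algebra ℂ A] [TopologicalSpace A]
    {B : Type*} {E : Type*}
    {H : Type*} [NormedAddCommGroup H] [InnerProductSpace ℂ H] [CompleteSpace H]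
    {K : Type*} [NormedAddCommGroup K] [InnerProductSpace ℂ K] [CompleteSpace K]
    {innerE : E → E → B} {φ : B → H →L[ℂ] H}
    (Φ : A → E → E) (ind : InducedSpace innerE φ K) (ψ : RepOn A K) : Prop :=
  ∀ a ξ h, ψ.toFun a (ind.ι ξ h) = ind.ι (Φ a ξ) h

/-- The data of the quotient C*-algebra `A_p = A / ker p` of a locally C*-algebra by a
continuous C*-seminorm `p`: a C*-algebra together with a surjective `*`-homomorphism
whose norm is induced by `p`. -/
structure CStarQuotient (A : Type u) [Ring A] [StarRing A] [Algebra ℂ A] [TopologicalSpace A]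
    (p : CStarSeminorm A)
    (Ap : Type v) [NormedRing Ap] [StarRing Ap] [CStarRing Ap] [NormedAlgebra ℂ Ap]
    [StarModule ℂ Ap] [CompleteSpace Ap] where
  π : A →⋆ₐ[ℂ] Ap
  surj : Function.Surjective π
  norm_eq : ∀ a, ‖π a‖ = p a

/-- The data of the quotient Hilbert C*-module `E_p = E / {ξ | p⟨ξ,ξ⟩ = 0}` over
`A_p`, for a Hilbert module `E` over a locally C*-algebra `A`. -/
structure ModuleQuotient {A : Type u} [Ring A] [StarRing A] [Algebra ℂ A] [UniformSpace A]
    {E : Type v} [AddCommGroup E] [Module ℂ E] [UniformSpace E]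
    (M : HilbertModule A E) (p : CStarSeminorm A)
    {Ap : Type w} [NormedRing Ap] [StarRing Ap] [CStarRing Ap] [NormedAlgebra ℂ Ap]
    [StarModule ℂ Ap] [CompleteSpace Ap] (Q : CStarQuotient A p Ap)
    {Ep : Type*} [NormedAddCommGroup Ep] [NormedSpace ℂ Ep]
    (Mp : HilbertCStarModule Ap Ep) where
  σ : E →ₗ[ℂ] Ep
  surj : Function.Surjective σ
  inner_eq : ∀ ξ η, Mp.inner (σ ξ) (σ η) = Q.π (M.inner ξ η)
  smul_eq : ∀ ξ a, σ (M.smul ξ a) = Mp.smul (σ ξ) (Q.π a)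

/-- The data of an isomorphism of the locally C*-algebra `B` onto `K_A(E)`, the
generalized compact operators of a full Hilbert `A`-module `E`; this witnesses
strong Morita equivalence of `A` and `B`. -/
structure MoritaData (A : Type u) [Ring A] [StarRing A] [Algebra ℂ A] [UniformSpace A]
    (B : Type v) [Ring B] [StarRing B] [Algebra ℂ B] [UniformSpace B]
    (E : Type w) [AddCommGroup E] [Module ℂ E] [UniformSpace E]
    (M : HilbertModule A E) where
  Φ : B → E → E
  map_add : ∀ b c ξ, Φ (b + c) ξ = Φ b ξ + Φ c ξ
  map_mul : ∀ b c ξ, Φ (b * c) ξ = Φ b (Φ c ξ)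
  map_smulC : ∀ (z : ℂ) b ξ, Φ (z • b) ξ = z • Φ b ξ
  adjoint : ∀ b, Adjointable M.inner (Φ b) (Φ (star b))
  inj : ∀ b, (∀ ξ, Φ b ξ = 0) → b = 0
  cont : ∀ p : CStarSeminorm A, ∃ q : CStarSeminorm B,
      ∀ b, OpSeminormLE M.inner (fun x => p x) (Φ b) (q b)
  cont_inv : ∀ q : CStarSeminorm B, ∃ p : CStarSeminorm A,
      ∀ (b : B) (C : ℝ), 0 ≤ C → OpSeminormLE M.inner (fun x => p x) (Φ b) C → q b ≤ C
  theta_mem : ∀ ξ η, ∃ b, ∀ ζ, Φ b ζ = M.smul ξ (M.inner η ζ)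
  dense_theta : Dense (↑(Submodule.span ℂ
      {b : B | ∃ ξ η, ∀ ζ, Φ b ζ = M.smul ξ (M.inner η ζ)}) : Set B)
  full : Dense (↑(Submodule.span ℂ {a : A | ∃ ξ η, a = M.inner ξ η}) : Set A)

/-! ### Auxiliary lemmas -/

namespace HilbertCStarModule

variable {B : Type u} [NormedRing B] [StarRing B] [CStarRing B]
    [NormedAlgebra ℂ B] [StarModule ℂ B] [CompleteSpace B]
    {F : Type v} [NormedAddCommGroup F] [NormedSpace ℂ F]
    (N : HilbertCStarModule B F)

lemma inner_zero_right (ξ : F) : N.inner ξ 0 = 0 := by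
  have h := N.inner_add_right ξ 0 0
  simpa using h.symm

lemma inner_zero_left (ξ : F) : N.inner 0 ξ = 0 := by
  rw [← N.star_inner, inner_zero_right, star_zero]

lemma inner_add_left (ξ η ζ : F) : N.inner (ξ + η) ζ = N.inner ξ ζ + N.inner η ζ := by
  rw [← N.star_inner, N.inner_add_right, star_add, N.star_inner, N.star_inner]

lemma inner_neg_right (ξ η : F) : N.inner ξ (-η) = - N.inner ξ η := by
  have h : N.inner ξ (-η) + N.inner ξ η = 0 := by
    rw [← N.inner_add_right, neg_add_cancel, inner_zero_right]
  exact eq_neg_of_add_eq_zero_left h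

lemma inner_neg_left (ξ η : F) : N.inner (-ξ) η = - N.inner ξ η := by
  rw [← N.star_inner, inner_neg_right, star_neg, N.star_inner]

lemma inner_sub_right (ξ η ζ : F) : N.inner ξ (η - ζ) = N.inner ξ η - N.inner ξ ζ := by
  rw [sub_eq_add_neg, N.inner_add_right, inner_neg_right, sub_eq_add_neg]

lemma inner_sub_left (ξ η ζ : F) : N.inner (ξ - η) ζ = N.inner ξ ζ - N.inner η ζ := by
  rw [sub_eq_add_neg, inner_add_left, inner_neg_left, sub_eq_add_neg]

lemma inner_smul_left (ξ η : F) (a : B) :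
    N.inner (N.smul ξ a) η = star a * N.inner ξ η := by
  rw [← N.star_inner η (N.smul ξ a), N.inner_smul_right, star_mul, N.star_inner]

/-- The Cauchy–Schwarz inequality in a Hilbert C*-module. -/
lemma norm_inner_sq_le (ξ η : F) :
    ‖N.inner ξ η‖ ^ 2 ≤ ‖N.inner ξ ξ‖ * ‖N.inner η η‖ := by
  letI : CStarAlgebra B :=
    { ‹NormedRing B›, ‹StarRing B›, ‹CStarRing B›, ‹NormedAlgebra ℂ B›,
      ‹StarModule ℂ B› with toCompleteSpace := ‹CompleteSpace B› }
  letI : PartialOrder B := CStarAlgebra.spectralOrder B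
  haveI : StarOrderedRing B := CStarAlgebra.spectralOrderedRing B
  set b := N.inner ξ η with hb
  set X := N.inner ξ ξ with hX
  set Y := N.inner η η with hY
  have key : ∀ t : ℝ, 0 ≤ t →
      2 * t * ‖b‖ ^ 2 ≤ ‖Y‖ + t ^ 2 * (‖X‖ * ‖b‖ ^ 2) := by
    intro t ht
    set a : B := (t : ℂ) • b with ha
    set ζ : F := η - N.smul ξ a with hζ
    have hstar_a : star a = (t : ℂ) • star b := by
      simp [ha, star_smul, Complex.star_def, Complex.conj_ofReal]
    have hζζ : N.inner ζ ζ = (Y + (((t : ℝ) : ℂ) * ((t : ℝ) : ℂ)) • (star b * (X * b)))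
        - (((2 * t : ℝ) : ℂ)) • (star b * b) := by
      rw [hζ, N.inner_sub_right, N.inner_sub_left, N.inner_sub_left,
        N.inner_smul_right, N.inner_smul_left, N.inner_smul_left, N.inner_smul_right,
        ← N.star_inner ξ η, ha, ← hb, ← hX, ← hY]
      rw [star_smul, Complex.star_def, Complex.conj_ofReal]
      simp only [mul_smul_comm, smul_mul_assoc, smul_smul]
      push_cast
      module
    have hpos : (0 : B) ≤ N.inner ζ ζ := by
      obtain ⟨c, hc⟩ := N.inner_self_pos ζ
      rw [hc]; exact star_mul_self_nonneg c
    have hle : ((2 * t : ℝ) : ℂ) • (star b * b)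
        ≤ Y + (((t : ℝ) : ℂ) * ((t : ℝ) : ℂ)) • (star b * (X * b)) := by
      rw [hζζ] at hpos
      exact sub_nonneg.mp hpos
    have hLnonneg : (0 : B) ≤ ((2 * t : ℝ) : ℂ) • (star b * b) := by
      have h2t : (0:ℝ) ≤ 2 * t := by linarith
      set s : ℝ := Real.sqrt (2 * t) with hs
      have hss : ((2 * t : ℝ) : ℂ) = (s : ℂ) * (s : ℂ) := by
        rw [← Complex.ofReal_mul, Real.mul_self_sqrt h2t]
      have hrw : ((2 * t : ℝ) : ℂ) • (star b * b) = star ((s : ℂ) • b) * ((s : ℂ) • b) := by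
        rw [star_smul, smul_mul_smul_comm, hss]
        congr 1
        simp [Complex.star_def, Complex.conj_ofReal]
      rw [hrw]
      exact star_mul_self_nonneg _
    have hnorm_le := CStarAlgebra.norm_le_norm_of_nonneg_of_le hLnonneg hle
    have hL : ‖((2 * t : ℝ) : ℂ) • (star b * b)‖ = 2 * t * ‖b‖ ^ 2 := by
      rw [norm_smul, CStarRing.norm_star_mul_self, Complex.norm_real, Real.norm_eq_abs,
        abs_of_nonneg (by linarith : (0:ℝ) ≤ 2 * t)]
      ring
    have hR : ‖Y + (((t : ℝ) : ℂ) * ((t : ℝ) : ℂ)) • (star b * (X * b))‖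
        ≤ ‖Y‖ + t ^ 2 * (‖X‖ * ‖b‖ ^ 2) := by
      refine (norm_add_le _ _).trans ?_
      have h1 : ‖(((t : ℝ) : ℂ) * ((t : ℝ) : ℂ)) • (star b * (X * b))‖
          ≤ t ^ 2 * (‖X‖ * ‖b‖ ^ 2) := by
        rw [norm_smul]
        have h2 : ‖star b * (X * b)‖ ≤ ‖b‖ * (‖X‖ * ‖b‖) :=
          (norm_mul_le _ _).trans (by
            rw [norm_star]
            exact mul_le_mul_of_nonneg_left (norm_mul_le _ _) (norm_nonneg _))
        have h3 : ‖((t : ℝ) : ℂ) * ((t : ℝ) : ℂ)‖ = t ^ 2 := by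
          rw [norm_mul, Complex.norm_real, Real.norm_eq_abs, abs_of_nonneg ht]; ring
        rw [h3]
        nlinarith [sq_nonneg t, norm_nonneg b, norm_nonneg X]
      linarith
    calc 2 * t * ‖b‖ ^ 2 = ‖((2 * t : ℝ) : ℂ) • (star b * b)‖ := hL.symm
      _ ≤ ‖Y + (((t : ℝ) : ℂ) * ((t : ℝ) : ℂ)) • (star b * (X * b))‖ := hnorm_le
      _ ≤ ‖Y‖ + t ^ 2 * (‖X‖ * ‖b‖ ^ 2) := hR
  rcases eq_or_lt_of_le (norm_nonneg X) with hX0 | hX0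
  · by_cases hb0 : ‖b‖ = 0
    · rw [hb0]
      norm_num
      positivity
    · exfalso
      have hbpos : 0 < ‖b‖ ^ 2 := by positivity
      have hk := key ((‖Y‖ + 1) / (2 * ‖b‖ ^ 2)) (by positivity)
      rw [← hX0] at hk
      have : 2 * ((‖Y‖ + 1) / (2 * ‖b‖ ^ 2)) * ‖b‖ ^ 2 = ‖Y‖ + 1 := by
        field_simp
      rw [this] at hk
      simp at hk
      linarith
  · have hk := key (1 / ‖X‖) (by positivity)
    have h1 : (1 / ‖X‖) ^ 2 * (‖X‖ * ‖b‖ ^ 2) = ‖b‖ ^ 2 / ‖X‖ := by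
      field_simp
    have h2 : 2 * (1 / ‖X‖) * ‖b‖ ^ 2 = 2 * (‖b‖ ^ 2 / ‖X‖) := by ring
    rw [h1, h2] at hk
    have h3 : ‖b‖ ^ 2 / ‖X‖ ≤ ‖Y‖ := by linarith
    calc ‖b‖ ^ 2 = ‖b‖ ^ 2 / ‖X‖ * ‖X‖ := by field_simp
      _ ≤ ‖Y‖ * ‖X‖ := mul_le_mul_of_nonneg_right h3 (le_of_lt hX0)
      _ = ‖X‖ * ‖Y‖ := mul_comm _ _

lemma norm_inner_le (ξ η : F) : ‖N.inner ξ η‖ ≤ ‖ξ‖ * ‖η‖ := by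
  have h := N.norm_inner_sq_le ξ η
  rw [N.norm_eq ξ, N.norm_eq η]
  rw [← Real.sqrt_mul (norm_nonneg _)]
  rw [← Real.sqrt_sq (norm_nonneg (N.inner ξ η))]
  exact Real.sqrt_le_sqrt h

lemma continuous_inner_left (χ : F) : Continuous fun v => N.inner v χ := by
  let g : F →+ B := AddMonoidHom.mk' (fun v => N.inner v χ) (fun a b => N.inner_add_left a b χ)
  have : Continuous g := AddMonoidHomClass.continuous_of_bound g ‖χ‖ (fun v => by
    simpa [mul_comm, g] using N.norm_inner_le v χ)
  exact this

end HilbertCStarModule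

namespace HilbertModule

variable {A : Type u} [Ring A] [StarRing A] [Algebra ℂ A] [UniformSpace A]
    {E : Type v} [AddCommGroup E] [Module ℂ E] [UniformSpace E]
    (M : HilbertModule A E)

lemma inner_zero_right (ξ : E) : M.inner ξ 0 = 0 := by
  have h := M.inner_add_right ξ 0 0
  simpa using h.symm

lemma inner_zero_left (ξ : E) : M.inner 0 ξ = 0 := by
  rw [← M.star_inner, inner_zero_right, star_zero]

lemma inner_add_left (ξ η ζ : E) : M.inner (ξ + η) ζ = M.inner ξ ζ + M.inner η ζ := by
  rw [← M.star_inner, M.inner_add_right, star_add, M.star_inner, M.star_inner]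

lemma inner_neg_right (ξ η : E) : M.inner ξ (-η) = - M.inner ξ η := by
  have h : M.inner ξ (-η) + M.inner ξ η = 0 := by
    rw [← M.inner_add_right, neg_add_cancel, inner_zero_right]
  exact eq_neg_of_add_eq_zero_left h

lemma inner_neg_left (ξ η : E) : M.inner (-ξ) η = - M.inner ξ η := by
  rw [← M.star_inner, inner_neg_right, star_neg, M.star_inner]

lemma inner_sub_right (ξ η ζ : E) : M.inner ξ (η - ζ) = M.inner ξ η - M.inner ξ ζ := by
  rw [sub_eq_add_neg, M.inner_add_right, inner_neg_right, sub_eq_add_neg]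

lemma inner_sub_left (ξ η ζ : E) : M.inner (ξ - η) ζ = M.inner ξ ζ - M.inner η ζ := by
  rw [sub_eq_add_neg, inner_add_left, inner_neg_left, sub_eq_add_neg]

lemma adjointable_symm {T S : E → E} (h : Adjointable M.inner T S) :
    Adjointable M.inner S T := by
  intro ξ η
  rw [← M.star_inner η (S ξ), ← h, M.star_inner]

lemma adjointable_linear {T S : E → E} (h : Adjointable M.inner T S) :
    ∃ TL : E →ₗ[ℂ] E, ⇑TL = T := by
  have hz : ∀ v : E, (∀ ζ, M.inner v ζ = 0) → v = 0 := fun v hv =>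
    M.inner_self_eq_zero v (hv v)
  have hadd : ∀ ξ η, T (ξ + η) = T ξ + T η := by
    intro ξ η
    have h0 : ∀ ζ, M.inner (T (ξ + η) - (T ξ + T η)) ζ = 0 := by
      intro ζ
      rw [M.inner_sub_left, sub_eq_zero, h, M.inner_add_left, M.inner_add_left, h, h]
    have := hz _ h0
    rwa [sub_eq_zero] at this
  have hsmul : ∀ (c : ℂ) ξ, T (c • ξ) = c • T ξ := by
    intro c ξ
    have h0 : ∀ ζ, M.inner (T (c • ξ) - c • T ξ) ζ = 0 := by
      intro ζ
      rw [M.inner_sub_left, sub_eq_zero, h, ← M.star_inner (S ζ) (c • ξ), M.inner_smulC,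
        ← M.star_inner ζ (c • T ξ), M.inner_smulC]
      have hx : M.inner ζ (T ξ) = M.inner (S ζ) ξ := by
        rw [← M.star_inner (T ξ) ζ, h, M.star_inner]
      rw [hx]
    have := hz _ h0
    rwa [sub_eq_zero] at this
  exact ⟨{ toFun := T, map_add' := hadd, map_smul' := hsmul }, rfl⟩

end HilbertModule

namespace CStarSeminorm

variable {A : Type u} [Ring A] [StarRing A] [Algebra ℂ A] [TopologicalSpace A]

@[simp] lemma mk_apply (f h1 h2 h3 h4 h5 h6) (a : A) :
    (CStarSeminorm.mk f h1 h2 h3 h4 h5 h6 : CStarSeminorm A) a = f a := rfl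

instance : Inhabited (CStarSeminorm A) :=
  ⟨{ toFun := fun _ => 0
     nonneg' := fun _ => le_refl 0
     add_le' := by intros; norm_num
     smul' := by intros; norm_num
     mul_le' := by intros; norm_num
     star_mul_self' := by intros; norm_num
     continuous' := continuous_const }⟩

instance : SemilatticeSup (CStarSeminorm A) where
  le p q := ∀ a, p a ≤ q a
  le_refl p a := le_rfl
  le_trans p q r h1 h2 a := (h1 a).trans (h2 a)
  le_antisymm p q h1 h2 := by
    cases p; cases q
    congr
    funext a
    exact le_antisymm (h1 a) (h2 a)
  sup p q :=
    { toFun := fun a => max (p a) (q a)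
      nonneg' := fun a => le_max_of_le_left (p.nonneg' a)
      add_le' := fun a b => max_le
        ((p.add_le' a b).trans (add_le_add (le_max_left _ _) (le_max_left _ _)))
        ((q.add_le' a b).trans (add_le_add (le_max_right _ _) (le_max_right _ _)))
      smul' := fun c a => by
        show max (p.toFun (c • a)) (q.toFun (c • a)) = ‖c‖ * max (p.toFun a) (q.toFun a)
        rw [p.smul', q.smul']
        rcases le_total (p.toFun a) (q.toFun a) with hpq | hpq
        · rw [max_eq_right hpq, max_eq_right (mul_le_mul_of_nonneg_left hpq (norm_nonneg c))]
        · rw [max_eq_left hpq, max_eq_left (mul_le_mul_of_nonneg_left hpq (norm_nonneg c))]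
      mul_le' := fun a b => max_le
        ((p.mul_le' a b).trans (mul_le_mul (le_max_left _ _) (le_max_left _ _)
          (p.nonneg' b) (le_max_of_le_left (p.nonneg' a))))
        ((q.mul_le' a b).trans (mul_le_mul (le_max_right _ _) (le_max_right _ _)
          (q.nonneg' b) (le_max_of_le_left (p.nonneg' a))))
      star_mul_self' := fun a => by
        show max (p.toFun (star a * a)) (q.toFun (star a * a)) = max (p.toFun a) (q.toFun a) ^ 2
        rw [p.star_mul_self', q.star_mul_self']
        rcases le_total (p.toFun a) (q.toFun a) with hpq | hpq
        · rw [max_eq_right hpq, max_eq_right (pow_le_pow_left₀ (p.nonneg' a) hpq 2)]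
        · rw [max_eq_left hpq, max_eq_left (pow_le_pow_left₀ (q.nonneg' a) hpq 2)]
      continuous' := p.continuous'.max q.continuous' }
  le_sup_left p q a := le_max_left _ _
  le_sup_right p q a := le_max_right _ _
  sup_le p q r h1 h2 a := max_le (h1 a) (h2 a)

lemma le_def {p q : CStarSeminorm A} : p ≤ q ↔ ∀ a, p a ≤ q a := Iff.rfl

end CStarSeminorm

/-- For a Hilbert module `E` over a locally C*-algebra `A`, the
algebra `L_A(E)` of adjointable operators, with the seminorms
`p̃(T) = sup{‖Tξ‖_p : ‖ξ‖_p ≤ 1}`, is isomorphic as a topological `*`-algebra to the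
inverse limit `lim← L_{A_p}(E_p)` via `T ↦ ((π_p)_*(T))_p`, where
`(π_p)_*(T)(σ_p ξ) = σ_p (T ξ)`: the canonical map is well defined, injective, has
exactly the compatible families as image, and identifies the seminorm `p̃` with the
operator norm on `L_{A_p}(E_p)`. -/
theorem statement19 (A : Type u) [Ring A] [StarRing A] [Algebra ℂ A] [UniformSpace A] [IsUniformAddGroup A]
    [IsTopologicalRing A] [ContinuousStar A] [ContinuousSMul ℂ A] [CompleteSpace A] [T2Space A] (hA : IsLocallyCStarAlgebra A)
    (E : Type u) [AddCommGroup E] [Module ℂ E] [UniformSpace E] [IsUniformAddGroup E]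
    [ContinuousSMul ℂ E]
    (M : HilbertModule A E)
    (Ap : CStarSeminorm A → Type u)
    [∀ p, NormedRing (Ap p)] [∀ p, StarRing (Ap p)] [∀ p, CStarRing (Ap p)]
    [∀ p, NormedAlgebra ℂ (Ap p)] [∀ p, StarModule ℂ (Ap p)] [∀ p, CompleteSpace (Ap p)]
    (Q : ∀ p, CStarQuotient A p (Ap p))
    (Ep : CStarSeminorm A → Type u)
    [∀ p, NormedAddCommGroup (Ep p)] [∀ p, NormedSpace ℂ (Ep p)]
    (Mp : ∀ p, HilbertCStarModule (Ap p) (Ep p))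
    (R : ∀ p, ModuleQuotient M p (Q p) (Mp p))
    (σpq : ∀ p q : CStarSeminorm A, (∀ a, q a ≤ p a) → (Ep p →L[ℂ] Ep q))
    (hσpq : ∀ (p q : CStarSeminorm A) (h : ∀ a, q a ≤ p a) (ξ : E),
      σpq p q h ((R p).σ ξ) = (R q).σ ξ) :
    -- (1) each adjointable operator T induces a unique (π_p)_*(T) on each E_p
    (∀ T S : E → E, Adjointable M.inner T S → ∀ p,
      ∃! Tp : Ep p →L[ℂ] Ep p, ∀ ξ, Tp ((R p).σ ξ) = (R p).σ (T ξ)) ∧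
    -- (2) the canonical map L_A(E) → lim← L_{A_p}(E_p) is injective
    (∀ T S T' S' : E → E, Adjointable M.inner T S → Adjointable M.inner T' S' →
      (∀ p ξ, (R p).σ (T ξ) = (R p).σ (T' ξ)) → T = T') ∧
    -- (3) its image is exactly the set of compatible families of adjointable operators
    (∀ x : ∀ p, Ep p →L[ℂ] Ep p,
      (∀ p, ∃ y : Ep p →L[ℂ] Ep p,
        Adjointable (Mp p).inner (fun ζ => x p ζ) (fun ζ => y ζ)) →
      (∀ (p q : CStarSeminorm A) (h : ∀ a, q a ≤ p a),
        (x q).comp (σpq p q h) = (σpq p q h).comp (x p)) →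
      ∃ T S : E → E, Adjointable M.inner T S ∧ ∀ p ξ, x p ((R p).σ ξ) = (R p).σ (T ξ)) ∧
    -- (4) it carries the seminorm p̃ to the operator norm, hence is a homeomorphism
    (∀ T S : E → E, Adjointable M.inner T S →
      ∀ (p : CStarSeminorm A) (Tp : Ep p →L[ℂ] Ep p),
        (∀ ξ, Tp ((R p).σ ξ) = (R p).σ (T ξ)) →
        ∀ C : ℝ, 0 ≤ C →
          (OpSeminormLE M.inner (fun x => p x) T C ↔ ‖Tp‖ ≤ C)) := by

  classical
  haveI hEc : CompleteSpace E := M.complete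
  -- basic facts about the quotient maps
  have hF1 : ∀ (p : CStarSeminorm A) (ξ : E),
      ‖(R p).σ ξ‖ = Real.sqrt (p (M.inner ξ ξ)) := by
    intro p ξ
    rw [(Mp p).norm_eq, (R p).inner_eq, (Q p).norm_eq]
  have hF2 : ∀ (p : CStarSeminorm A) (ξ η : E),
      p (M.inner ξ η) = ‖(Mp p).inner ((R p).σ ξ) ((R p).σ η)‖ := by
    intro p ξ η
    rw [(R p).inner_eq, (Q p).norm_eq]
  have hF2b : ∀ (p : CStarSeminorm A) (ξ : E), p (M.inner ξ ξ) = ‖(R p).σ ξ‖ ^ 2 := by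
    intro p ξ
    rw [hF1, Real.sq_sqrt (show (0:ℝ) ≤ p (M.inner ξ ξ) from p.nonneg' _)]
  have hF3 : ∀ (p : CStarSeminorm A) (ξ η : E),
      p (M.inner ξ η) ≤ ‖(R p).σ ξ‖ * ‖(R p).σ η‖ := by
    intro p ξ η
    rw [hF2]
    exact (Mp p).norm_inner_le ((R p).σ ξ) ((R p).σ η)
  have hF4 : ∀ (T S : E → E), Adjointable M.inner T S → ∀ (p : CStarSeminorm A) (ξ : E),
      (R p).σ ξ = 0 → (R p).σ (T ξ) = 0 := by
    intro T S hTS p ξ h0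
    have h1 : p (M.inner (T ξ) (T ξ)) = 0 := by
      have h2 := hF3 p ξ (S (T ξ))
      rw [← hTS] at h2
      rw [h0, norm_zero, zero_mul] at h2
      exact le_antisymm h2 (p.nonneg' _)
    have h3 : ‖(R p).σ (T ξ)‖ = 0 := by rw [hF1, h1, Real.sqrt_zero]
    exact norm_eq_zero.mp h3
  have hF5 : ∀ (T S : E → E), Adjointable M.inner T S → ∀ (p : CStarSeminorm A) (ξ η : E),
      (R p).σ ξ = (R p).σ η → (R p).σ (T ξ) = (R p).σ (T η) := by
    intro T S hTS p ξ η hσ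
    obtain ⟨TL, hTL⟩ := M.adjointable_linear hTS
    have h0 : (R p).σ (ξ - η) = 0 := by rw [map_sub, hσ, sub_self]
    have h1 : (R p).σ (T (ξ - η)) = 0 := hF4 T S hTS p _ h0
    have h2 : T (ξ - η) = T ξ - T η := by rw [← hTL, map_sub]
    rw [h2, map_sub, sub_eq_zero] at h1
    exact h1
  -- separation
  have hsep : ∀ a : A, (∀ p : CStarSeminorm A, p a = 0) → a = 0 := by
    intro a ha
    have h1 : Tendsto id (pure a) (𝓝 (0 : A)) := by
      rw [hA]
      intro p
      refine tendsto_pure_left.mpr fun s hs => ?_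
      have h0 : (0:ℝ) ∈ s := mem_of_mem_nhds hs
      simpa [ha p] using h0
    have h2 : a ⤳ (0 : A) := specializes_iff_pure.mpr (tendsto_id'.mp h1)
    exact h2.eq
  have hsepE : ∀ v : E, (∀ p : CStarSeminorm A, (R p).σ v = 0) → v = 0 := by
    intro v hv
    refine M.inner_self_eq_zero v (hsep _ fun p => ?_)
    rw [hF2b, hv p, norm_zero]
    norm_num
  -- continuity of the quotient maps
  have hσ0 : ∀ (p : CStarSeminorm A) (l : Filter E), Tendsto id l (𝓝 0) →
      Tendsto (fun ξ => ‖(R p).σ ξ‖) l (𝓝 0) := by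
    intro p l hl
    have h1 := (M.topology_eq l).mp hl p
    have h2 : (fun ξ : E => Real.sqrt (p (M.inner ξ ξ))) = fun ξ => ‖(R p).σ ξ‖ := by
      funext ξ
      rw [hF1]
    rwa [h2] at h1
  have hσt : ∀ (p : CStarSeminorm A) (F : Filter E) (x : E), F ≤ 𝓝 x →
      Tendsto (fun ξ => (R p).σ ξ) F (𝓝 ((R p).σ x)) := by
    intro p F x hF
    rw [tendsto_iff_norm_sub_tendsto_zero]
    have hsub : Tendsto (fun ξ : E => ξ - x) F (𝓝 0) := by
      have h1 : Tendsto (fun ξ : E => ξ - x) (𝓝 x) (𝓝 (x - x)) :=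
        (continuous_id.sub continuous_const).tendsto x
      rw [sub_self] at h1
      exact h1.mono_left hF
    have h2 := hσ0 p (Filter.map (fun ξ : E => ξ - x) F) (tendsto_id'.2 hsub)
    have h3 := h2.comp (Filter.tendsto_map : Tendsto _ F (Filter.map (fun ξ : E => ξ - x) F))
    refine h3.congr fun ξ => ?_
    show ‖(R p).σ (ξ - x)‖ = ‖(R p).σ ξ - (R p).σ x‖
    rw [map_sub]
  -- existence of limits of compatible families
  have hlim : ∀ v : (∀ p, Ep p),
      (∀ (p q : CStarSeminorm A) (h : ∀ a, q a ≤ p a), σpq p q h (v p) = v q) →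
      ∃ ξ : E, ∀ p, (R p).σ ξ = v p := by
    intro v hv
    set f : CStarSeminorm A → E := fun p => Function.surjInv (R p).surj (v p) with hf
    have hfp : ∀ p, (R p).σ (f p) = v p := fun p => Function.surjInv_eq (R p).surj (v p)
    have hle : ∀ (p r : CStarSeminorm A), r ≤ p → (R r).σ (f p) = v r := by
      intro p r hrp
      rw [← hσpq p r (fun a => hrp a) (f p), hfp p]
      exact hv p r (fun a => hrp a)
    haveI hNB : (Filter.atTop : Filter (CStarSeminorm A)).NeBot := Filter.atTop_neBot
    have hC : Cauchy (Filter.map f Filter.atTop) := by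
      constructor
      · exact hNB.map f
      · rw [uniformity_eq_comap_nhds_zero E, Filter.prod_map_map_eq,
          ← Filter.map_le_iff_le_comap, Filter.map_map]
        show Tendsto (fun pq : CStarSeminorm A × CStarSeminorm A => f pq.2 - f pq.1)
          (Filter.atTop ×ˢ Filter.atTop) (𝓝 0)
        have key : Tendsto id (Filter.map
            (fun pq : CStarSeminorm A × CStarSeminorm A => f pq.2 - f pq.1)
            (Filter.atTop ×ˢ Filter.atTop)) (𝓝 (0 : E)) := by
          rw [M.topology_eq]
          intro r
          rw [Filter.tendsto_map'_iff]
          have hev : ∀ᶠ pq : CStarSeminorm A × CStarSeminorm A in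
              Filter.atTop ×ˢ Filter.atTop,
              (0 : ℝ) = Real.sqrt (r (M.inner (f pq.2 - f pq.1) (f pq.2 - f pq.1))) := by
            filter_upwards [(Filter.eventually_ge_atTop r).prod_mk
              (Filter.eventually_ge_atTop r)] with pq hpq
            have hz : (R r).σ (f pq.2 - f pq.1) = 0 := by
              rw [map_sub, hle pq.2 r hpq.2, hle pq.1 r hpq.1, sub_self]
            have : r (M.inner (f pq.2 - f pq.1) (f pq.2 - f pq.1)) = 0 := by
              rw [hF2b, hz, norm_zero]
              norm_num
            rw [this, Real.sqrt_zero]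
          exact (tendsto_const_nhds :
            Tendsto (fun _ : CStarSeminorm A × CStarSeminorm A => (0:ℝ)) _ (𝓝 0)).congr' hev
        exact tendsto_id'.mp key
    obtain ⟨ξ, hξ⟩ := CompleteSpace.complete hC
    refine ⟨ξ, fun p => ?_⟩
    have h1 : Tendsto (fun q => (R p).σ (f q)) Filter.atTop (𝓝 ((R p).σ ξ)) :=
      (hσt p _ ξ hξ).comp Filter.tendsto_map
    have h2 : Tendsto (fun q => (R p).σ (f q)) Filter.atTop (𝓝 (v p)) := by
      refine Tendsto.congr' ?_ (tendsto_const_nhds :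
        Tendsto (fun _ : CStarSeminorm A => v p) _ (𝓝 (v p)))
      filter_upwards [Filter.eventually_ge_atTop p] with q hq
      exact (hle q p hq).symm
    exact tendsto_nhds_unique h1 h2
  -- Part 1
  have part1 : ∀ T S : E → E, Adjointable M.inner T S → ∀ p,
      ∃! Tp : Ep p →L[ℂ] Ep p, ∀ ξ, Tp ((R p).σ ξ) = (R p).σ (T ξ) := by
    intro T S hTS p
    haveI : CompleteSpace (Ep p) := (Mp p).complete
    have hconstr : ∀ (U V : E → E), Adjointable M.inner U V →
        ∃ g : Ep p →ₗ[ℂ] Ep p, ∀ ξ, g ((R p).σ ξ) = (R p).σ (U ξ) := by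
      intro U V hUV
      obtain ⟨UL, hUL⟩ := M.adjointable_linear hUV
      have key : ∀ (u : Ep p) (ξ : E), (R p).σ ξ = u →
          (R p).σ (U (Function.surjInv (R p).surj u)) = (R p).σ (U ξ) := by
        intro u ξ hξ
        exact hF5 U V hUV p _ _ (by rw [Function.surjInv_eq (R p).surj u, hξ])
      refine ⟨{ toFun := fun u => (R p).σ (U (Function.surjInv (R p).surj u))
                map_add' := ?_, map_smul' := ?_ }, ?_⟩
      · intro u w
        obtain ⟨ξ, hξ⟩ := (R p).surj u
        obtain ⟨η, hη⟩ := (R p).surj w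
        show (R p).σ (U (Function.surjInv (R p).surj (u + w)))
          = (R p).σ (U (Function.surjInv (R p).surj u))
            + (R p).σ (U (Function.surjInv (R p).surj w))
        rw [key (u + w) (ξ + η) (by rw [map_add, hξ, hη]), key u ξ hξ, key w η hη]
        have : U (ξ + η) = U ξ + U η := by rw [← hUL, map_add]
        rw [this, map_add]
      · intro c u
        obtain ⟨ξ, hξ⟩ := (R p).surj u
        show (R p).σ (U (Function.surjInv (R p).surj (c • u)))
          = c • (R p).σ (U (Function.surjInv (R p).surj u))
        rw [key (c • u) (c • ξ) (by rw [map_smul, hξ]), key u ξ hξ]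
        have hsm : U (c • ξ) = c • U ξ := by rw [← hUL, map_smul]
        rw [hsm, map_smul]
      · intro ξ
        exact key ((R p).σ ξ) ξ rfl
    obtain ⟨gT, hgT⟩ := hconstr T S hTS
    obtain ⟨gS, hgS⟩ := hconstr S T (M.adjointable_symm hTS)
    have hadj : ∀ u w, (Mp p).inner (gT u) w = (Mp p).inner u (gS w) := by
      intro u w
      obtain ⟨ξ, rfl⟩ := (R p).surj u
      obtain ⟨η, rfl⟩ := (R p).surj w
      rw [hgT, hgS, (R p).inner_eq, (R p).inner_eq, hTS]
    have hcont : Continuous gT := by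
      apply LinearMap.continuous_of_isClosed_graph
      have hgraph : (gT.graph : Set (Ep p × Ep p)) = ⋂ χ : Ep p,
          {z : Ep p × Ep p | (Mp p).inner z.2 χ - (Mp p).inner z.1 (gS χ) = 0} := by
        ext z
        simp only [Set.mem_iInter, Set.mem_setOf_eq, LinearMap.mem_graph_iff]
        constructor
        · intro h χ
          rw [h, hadj, sub_self]
        · intro h
          have h1 : ∀ χ, (Mp p).inner (z.2 - gT z.1) χ = 0 := by
            intro χ
            rw [(Mp p).inner_sub_left, hadj, sub_eq_zero]
            exact sub_eq_zero.mp (h χ)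
          have hz := (Mp p).inner_self_eq_zero _ (h1 (z.2 - gT z.1))
          rwa [sub_eq_zero] at hz
      rw [hgraph]
      refine isClosed_iInter fun χ => ?_
      have c1 : Continuous fun z : Ep p × Ep p => (Mp p).inner z.2 χ :=
        ((Mp p).continuous_inner_left χ).comp continuous_snd
      have c2 : Continuous fun z : Ep p × Ep p => (Mp p).inner z.1 (gS χ) :=
        ((Mp p).continuous_inner_left (gS χ)).comp continuous_fst
      exact isClosed_eq (c1.sub c2) continuous_const
    refine ⟨⟨gT, hcont⟩, hgT, ?_⟩
    intro T' hT'
    apply ContinuousLinearMap.ext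
    intro u
    obtain ⟨ξ, rfl⟩ := (R p).surj u
    rw [hT' ξ]
    exact (hgT ξ).symm
  -- Part 2
  have part2 : ∀ T S T' S' : E → E, Adjointable M.inner T S → Adjointable M.inner T' S' →
      (∀ p ξ, (R p).σ (T ξ) = (R p).σ (T' ξ)) → T = T' := by
    intro T S T' S' h1 h2 hEq
    funext ξ
    have h3 : ∀ p, (R p).σ (T ξ - T' ξ) = 0 := by
      intro p
      rw [map_sub, hEq p ξ, sub_self]
    have h4 := hsepE _ h3
    exact sub_eq_zero.mp h4
  -- Part 3
  have part3 : ∀ x : ∀ p, Ep p →L[ℂ] Ep p,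
      (∀ p, ∃ y : Ep p →L[ℂ] Ep p,
        Adjointable (Mp p).inner (fun ζ => x p ζ) (fun ζ => y ζ)) →
      (∀ (p q : CStarSeminorm A) (h : ∀ a, q a ≤ p a),
        (x q).comp (σpq p q h) = (σpq p q h).comp (x p)) →
      ∃ T S : E → E, Adjointable M.inner T S ∧ ∀ p ξ, x p ((R p).σ ξ) = (R p).σ (T ξ) := by
    intro x hadj hcompat
    choose y hy using hadj
    have hxv : ∀ (ξ : E) (p q : CStarSeminorm A) (h : ∀ a, q a ≤ p a),
        σpq p q h (x p ((R p).σ ξ)) = x q ((R q).σ ξ) := by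
      intro ξ p q h
      have h1 := ContinuousLinearMap.ext_iff.mp (hcompat p q h) ((R p).σ ξ)
      rw [ContinuousLinearMap.comp_apply, ContinuousLinearMap.comp_apply, hσpq] at h1
      exact h1.symm
    have hyv : ∀ (η : E) (p q : CStarSeminorm A) (h : ∀ a, q a ≤ p a),
        σpq p q h (y p ((R p).σ η)) = y q ((R q).σ η) := by
      intro η p q h
      obtain ⟨η', hη'⟩ := (R p).surj (y p ((R p).σ η))
      rw [← hη', hσpq]
      have hz : ∀ ζ : E, (Mp q).inner ((R q).σ ζ) ((R q).σ η' - y q ((R q).σ η)) = 0 := by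
        intro ζ
        rw [(Mp q).inner_sub_right, sub_eq_zero, ← hy q ((R q).σ ζ) ((R q).σ η)]
        obtain ⟨ζ', hζ'⟩ := (R p).surj (x p ((R p).σ ζ))
        have hxq : x q ((R q).σ ζ) = (R q).σ ζ' := by
          rw [← hxv ζ p q h, ← hζ', hσpq]
        simp only [hxq]
        rw [(R q).inner_eq, (R q).inner_eq]
        have hp' : (Q p).π (M.inner ζ η') = (Q p).π (M.inner ζ' η) := by
          rw [← (R p).inner_eq, ← (R p).inner_eq, hη', hζ']
          exact ((hy p ((R p).σ ζ) ((R p).σ η)).symm)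
        have h0 : p (M.inner ζ η' - M.inner ζ' η) = 0 := by
          rw [← (Q p).norm_eq, map_sub, hp', sub_self, norm_zero]
        have h0q : q (M.inner ζ η' - M.inner ζ' η) = 0 :=
          le_antisymm (le_of_le_of_eq (h _) h0) (q.nonneg' _)
        rw [← sub_eq_zero, ← map_sub, ← norm_eq_zero, (Q q).norm_eq]
        exact h0q
      have hz' : ∀ w : Ep q, (Mp q).inner w ((R q).σ η' - y q ((R q).σ η)) = 0 := by
        intro w
        obtain ⟨ζ, rfl⟩ := (R q).surj w
        exact hz ζ
      have h00 := (Mp q).inner_self_eq_zero _ (hz' _)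
      exact sub_eq_zero.mp h00
    choose Tf hTf using fun ξ : E =>
      hlim (fun p => x p ((R p).σ ξ)) (fun p q h => hxv ξ p q h)
    choose Sf hSf using fun η : E =>
      hlim (fun p => y p ((R p).σ η)) (fun p q h => hyv η p q h)
    refine ⟨Tf, Sf, ?_, fun p ξ => (hTf ξ p).symm⟩
    intro ξ η
    have h5 : ∀ p : CStarSeminorm A, p (M.inner (Tf ξ) η - M.inner ξ (Sf η)) = 0 := by
      intro p
      have e1 : (Q p).π (M.inner (Tf ξ) η) = (Q p).π (M.inner ξ (Sf η)) := by
        rw [← (R p).inner_eq, ← (R p).inner_eq, hTf ξ p, hSf η p]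
        exact hy p ((R p).σ ξ) ((R p).σ η)
      rw [← (Q p).norm_eq, map_sub, e1, sub_self, norm_zero]
    have h6 := hsep _ h5
    exact sub_eq_zero.mp h6
  -- Part 4
  have part4 : ∀ T S : E → E, Adjointable M.inner T S →
      ∀ (p : CStarSeminorm A) (Tp : Ep p →L[ℂ] Ep p),
        (∀ ξ, Tp ((R p).σ ξ) = (R p).σ (T ξ)) →
        ∀ C : ℝ, 0 ≤ C →
          (OpSeminormLE M.inner (fun x => p x) T C ↔ ‖Tp‖ ≤ C) := by
    intro T S hTS p Tp hTp C hC
    constructor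
    · intro hOp
      refine ContinuousLinearMap.opNorm_le_bound Tp hC ?_
      intro u
      obtain ⟨ξ, rfl⟩ := (R p).surj u
      rw [hTp ξ]
      have h1 : p (M.inner (T ξ) (T ξ)) ≤ C ^ 2 * p (M.inner ξ ξ) := hOp ξ
      rw [hF2b, hF2b] at h1
      nlinarith [norm_nonneg ((R p).σ (T ξ)), norm_nonneg ((R p).σ ξ),
        mul_nonneg hC (norm_nonneg ((R p).σ ξ))]
    · intro hN ξ
      show p (M.inner (T ξ) (T ξ)) ≤ C ^ 2 * p (M.inner ξ ξ)
      rw [hF2b, hF2b]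
      have h1 := Tp.le_opNorm ((R p).σ ξ)
      rw [hTp ξ] at h1
      have h2 : ‖(R p).σ (T ξ)‖ ≤ C * ‖(R p).σ ξ‖ :=
        h1.trans (mul_le_mul_of_nonneg_right hN (norm_nonneg _))
      nlinarith [norm_nonneg ((R p).σ (T ξ)), norm_nonneg ((R p).σ ξ)]
  exact ⟨part1, part2, part3, part4⟩
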